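/- The tiling parameter of the Euclidean ball with k-point multilattices, γ(B^n, k), is at most 2 for k = ⌈2^n/vol(B^n)⌉: there exists a lattice Ω and a multilattice Φ = ⋃_{i=1}^k (Ω + x_i) together with an associated tiling Ψ by convex polytopes such that for every x ∈ Φ, B^n + x ⊆ ψ_x ⊆ 2B^n + x (up to arbitrarily small ε). -/

import Mathlib

open MeasureTheory Metric ENNReal

namespace Stmt16

variable {n : ℕ}

local notation "E" => EuclideanSpace ℝ (Fin n)

lemma abs_coord_le (x : E) (i : Fin n) : |x i| ≤ ‖x‖ := by
  rw [EuclideanSpace.norm_eq]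
  rw [← Real.sqrt_sq_eq_abs]
  apply Real.sqrt_le_sqrt
  have : x i ^ 2 = ‖x i‖ ^ 2 := by rw [Real.norm_eq_abs, sq_abs]
  rw [this]
  exact Finset.single_le_sum (f := fun j => ‖x j‖ ^ 2) (fun j _ => by positivity)
    (Finset.mem_univ i)

/-- The lattice (2ℤ)ⁿ as a set. -/
def lat (n : ℕ) : Set (EuclideanSpace ℝ (Fin n)) :=
  {p | ∃ v : Fin n → ℤ, p = (WithLp.equiv 2 (Fin n → ℝ)).symm (fun m => (2 * v m : ℝ))}

lemma mem_lat_iff {p : E} : p ∈ lat n ↔ ∃ v : Fin n → ℤ, ∀ i, p i = 2 * v i := by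
  constructor
  · rintro ⟨v, rfl⟩
    exact ⟨v, fun i => by simp⟩
  · rintro ⟨v, hv⟩
    refine ⟨v, ?_⟩
    rw [Equiv.eq_symm_apply]
    funext i
    simpa using hv i

lemma lat_zero : (0 : E) ∈ lat n := by
  rw [mem_lat_iff]; exact ⟨0, fun i => by simp⟩

lemma lat_add {p q : E} (hp : p ∈ lat n) (hq : q ∈ lat n) : p + q ∈ lat n := by
  rw [mem_lat_iff] at *
  obtain ⟨v, hv⟩ := hp; obtain ⟨w, hw⟩ := hq
  exact ⟨v + w, fun i => by simp [hv i, hw i]; push_cast; ring⟩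

lemma lat_neg {p : E} (hp : p ∈ lat n) : -p ∈ lat n := by
  rw [mem_lat_iff] at *
  obtain ⟨v, hv⟩ := hp
  exact ⟨-v, fun i => by simp [hv i]⟩

lemma lat_sub {p q : E} (hp : p ∈ lat n) (hq : q ∈ lat n) : p - q ∈ lat n := by
  rw [sub_eq_add_neg]; exact lat_add hp (lat_neg hq)

lemma lat_norm {p : E} (hp : p ∈ lat n) (hp0 : p ≠ 0) : 2 ≤ ‖p‖ := by
  rw [mem_lat_iff] at hp
  obtain ⟨v, hv⟩ := hp
  have : ∃ i, p i ≠ 0 := by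
    by_contra h
    push_neg at h
    apply hp0
    ext i
    exact h i
  obtain ⟨i, hi⟩ := this
  have hvi : v i ≠ 0 := by
    intro h; apply hi; rw [hv i, h]; simp
  have : (2 : ℝ) ≤ |p i| := by
    rw [hv i, abs_mul, abs_two]
    have : (1:ℝ) ≤ |(v i : ℝ)| := by
      rw [← Int.cast_abs]
      exact_mod_cast Int.one_le_abs hvi
    nlinarith
  exact this.trans (abs_coord_le p i)


/-- The half-open cube [0,2)ⁿ. -/
def cube (n : ℕ) : Set (EuclideanSpace ℝ (Fin n)) := {y | ∀ i, y i ∈ Set.Ico (0:ℝ) 2}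

/-- The multilattice generated by S. -/
def mult (S : Finset (EuclideanSpace ℝ (Fin n))) : Set (EuclideanSpace ℝ (Fin n)) :=
  {p | ∃ s ∈ S, ∃ l ∈ lat n, p = s + l}

lemma subset_mult {S : Finset (EuclideanSpace ℝ (Fin n))} {s : E} (hs : s ∈ S) : s ∈ mult S :=
  ⟨s, hs, 0, lat_zero, by simp⟩

lemma mult_add_lat {S : Finset (EuclideanSpace ℝ (Fin n))} {p l : E} (hp : p ∈ mult S)
    (hl : l ∈ lat n) : p + l ∈ mult S := by
  obtain ⟨s, hs, m, hm, rfl⟩ := hp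
  exact ⟨s, hs, m + l, lat_add hm hl, by abel⟩

def good (S : Finset (EuclideanSpace ℝ (Fin n))) : Prop :=
  (↑S ⊆ cube n) ∧ (mult S).Pairwise fun p q => 2 ≤ dist p q

/-- key halfspace characterization of bisector inequalities. -/
lemma dist_le_dist_iff (p q y : E) :
    dist y p ≤ dist y q ↔ (inner ℝ (q - p) y : ℝ) ≤ (‖q‖^2 - ‖p‖^2) / 2 := by
  have h1 : dist y p ^ 2 = ‖y‖ ^ 2 - 2 * (inner ℝ y p : ℝ) + ‖p‖ ^ 2 := by
    rw [dist_eq_norm]; exact norm_sub_sq_real y p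
  have h2 : dist y q ^ 2 = ‖y‖ ^ 2 - 2 * (inner ℝ y q : ℝ) + ‖q‖ ^ 2 := by
    rw [dist_eq_norm]; exact norm_sub_sq_real y q
  have h3 : (inner ℝ (q - p) y : ℝ) = inner ℝ y q - inner ℝ y p := by
    rw [inner_sub_left, real_inner_comm q y, real_inner_comm p y]
  constructor
  · intro h
    have := pow_le_pow_left₀ dist_nonneg h 2
    nlinarith
  · intro h
    have h4 : dist y p ^ 2 ≤ dist y q ^ 2 := by nlinarith
    nlinarith [dist_nonneg (x := y) (y := p), dist_nonneg (x := y) (y := q)]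

/-- Voronoi cell of p with respect to Y. -/
def cell (Y : Set (EuclideanSpace ℝ (Fin n))) (p : EuclideanSpace ℝ (Fin n)) :
    Set (EuclideanSpace ℝ (Fin n)) := {y | ∀ q ∈ Y, dist y p ≤ dist y q}

lemma convex_cell (Y : Set (EuclideanSpace ℝ (Fin n))) (p : E) : Convex ℝ (cell Y p) := by
  have : cell Y p = ⋂ q ∈ Y, {y : E | (inner ℝ (q - p) y : ℝ) ≤ (‖q‖^2 - ‖p‖^2) / 2} := by
    ext y
    simp only [cell, Set.mem_setOf_eq, Set.mem_iInter]
    exact forall₂_congr fun q _ => dist_le_dist_iff p q y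
  rw [this]
  refine convex_iInter₂ fun q _ => convex_halfSpace_le ?_ _
  exact ⟨fun a b => inner_add_right _ _ _, fun c a => real_inner_smul_right _ _ _⟩

lemma cell_interior_unique {Y : Set (EuclideanSpace ℝ (Fin n))} {p q y : E}
    (hp : p ∈ Y) (hq : q ∈ Y) (hyp : y ∈ interior (cell Y p)) (hyq : y ∈ cell Y q) : p = q := by
  by_contra hpq
  have hyp' : y ∈ cell Y p := interior_subset hyp
  have hd : dist y p = dist y q := le_antisymm (hyp' q hq) (hyq p hp)
  set d := dist y p with hdd
  have hd0 : 0 < d := by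
    rcases lt_or_eq_of_le (dist_nonneg (x := y) (y := p)) with h | h
    · exact h
    · exfalso; apply hpq
      have h1 : y = p := by rw [← dist_eq_zero]; exact h.symm ▸ rfl
      have h2 : y = q := by rw [← dist_eq_zero, ← hd, hdd, ← h]
      rw [← h1, ← h2]
  obtain ⟨ε, hε, hball⟩ := Metric.mem_nhds_iff.mp (mem_interior_iff_mem_nhds.mp hyp)
  set u := y - p with hu
  set v := y - q with hv
  have hnu : ‖u‖ = d := by rw [hu, ← dist_eq_norm]
  have hnv : ‖v‖ = d := by rw [hv, ← dist_eq_norm, hd]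
  set t : ℝ := min (1/2) (ε / (2 * d)) with ht
  have ht0 : 0 < t := lt_min (by norm_num) (by positivity)
  have ht1 : t ≤ 1/2 := min_le_left _ _
  have hyball : y - t • v ∈ Metric.ball y ε := by
    rw [Metric.mem_ball, dist_eq_norm]
    have : y - t • v - y = -(t • v) := by abel
    rw [this, norm_neg, norm_smul, Real.norm_eq_abs, abs_of_pos ht0, hnv]
    calc t * d ≤ (ε / (2 * d)) * d := by
          have := min_le_right (1/2) (ε / (2*d)); nlinarith
      _ = ε / 2 := by field_simp
      _ < ε := by linarith
  have hmem : y - t • v ∈ cell Y p := hball hyball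
  have hple : dist (y - t • v) p ≤ dist (y - t • v) q := hmem q hq
  have e1 : dist (y - t • v) q = (1 - t) * d := by
    rw [dist_eq_norm]
    have : y - t • v - q = (1 - t) • v := by rw [hv]; module
    rw [this, norm_smul, Real.norm_eq_abs, abs_of_pos (by linarith), hnv]
  have e2 : dist (y - t • v) p ^ 2 = d^2 - 2 * t * (inner ℝ u v : ℝ) + t^2 * d^2 := by
    rw [dist_eq_norm]
    have : y - t • v - p = u - t • v := by rw [hu]; abel
    rw [this, norm_sub_sq_real, real_inner_smul_right, norm_smul, Real.norm_eq_abs,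
      abs_of_pos ht0, hnu, hnv]
    ring
  have hsq : dist (y - t • v) p ^ 2 ≤ ((1 - t) * d)^2 := by
    rw [← e1]; exact pow_le_pow_left₀ dist_nonneg hple 2
  have hinner : d^2 ≤ (inner ℝ u v : ℝ) := by nlinarith
  have hcs : (inner ℝ u v : ℝ) ≤ d^2 := by
    calc (inner ℝ u v : ℝ) ≤ ‖u‖ * ‖v‖ := real_inner_le_norm u v
      _ = d^2 := by rw [hnu, hnv]; ring
  have heq : (inner ℝ u v : ℝ) = ‖u‖ * ‖v‖ := by rw [hnu, hnv]; nlinarith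
  have := inner_eq_norm_mul_iff_real.mp heq
  rw [hnu, hnv] at this
  have huv : u = v := by
    have := smul_right_injective E (ne_of_gt hd0) this
    exact this
  apply hpq
  have : p = q := by
    have : y - p = y - q := huv
    linear_combination (norm := module) -this
  exact this


lemma measurableSet_cube : MeasurableSet (cube n) := by
  have : cube n = ⋂ i, (fun y : EuclideanSpace ℝ (Fin n) => y i) ⁻¹' Set.Ico (0:ℝ) 2 := by
    ext y; simp [cube]
  rw [this]
  exact MeasurableSet.iInter fun i =>
    ((EuclideanSpace.proj i : EuclideanSpace ℝ (Fin n) →L[ℝ] ℝ).continuous.measurable)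
      measurableSet_Ico

lemma volume_cube : volume (cube n) = 2 ^ n := by
  have hc : cube n = (MeasurableEquiv.toLp 2 (Fin n → ℝ)).symm ⁻¹'
      (Set.univ.pi fun _ => Set.Ico (0:ℝ) 2) := by
    ext y
    simp only [cube, Set.mem_preimage, Set.mem_pi, Set.mem_univ, forall_true_left,
      Set.mem_setOf_eq, MeasurableEquiv.toLp_symm_apply]
  rw [hc, (EuclideanSpace.volume_preserving_symm_measurableEquiv_toLp (Fin n)).measure_preimage
    (MeasurableSet.univ_pi fun _ => measurableSet_Ico).nullMeasurableSet]
  rw [volume_pi_pi]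
  simp [Real.volume_Ico]

/-- offsets indexed by Fin 3 functions -/
noncomputable def off (f : Fin n → Fin 3) : EuclideanSpace ℝ (Fin n) :=
  (WithLp.equiv 2 (Fin n → ℝ)).symm (fun i => 2 * (f i : ℝ) - 2)

lemma off_apply (f : Fin n → Fin 3) (i : Fin n) : off f i = 2 * (f i : ℝ) - 2 := rfl

lemma off_mem_lat (f : Fin n → Fin 3) : off f ∈ lat n :=
  mem_lat_iff.mpr ⟨fun i => (f i : ℤ) - 1, fun i => by rw [off_apply]; push_cast; ring⟩

lemma cube_sub_lat {s t : EuclideanSpace ℝ (Fin n)} (hs : s ∈ cube n) (ht : t ∈ cube n)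
    (h : s - t ∈ lat n) : s = t := by
  obtain ⟨v, hv⟩ := mem_lat_iff.mp h
  ext i
  have h1 := hs i
  have h2 := ht i
  have h3 := hv i
  rw [PiLp.sub_apply] at h3
  simp only [Set.mem_Ico] at h1 h2
  have : v i = 0 := by
    by_contra hvi
    have : (1:ℝ) ≤ |(v i : ℝ)| := by
      rw [← Int.cast_abs]; exact_mod_cast Int.one_le_abs hvi
    rcases abs_cases ((v i : ℝ)) with ⟨he, _⟩ | ⟨he, _⟩ <;> rw [he] at this <;> linarith
  rw [this] at h3
  push_cast at h3
  linarith

lemma off_eq_off {f g : Fin n → Fin 3} (h : off f = off g) : f = g := by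
  funext i
  have := congrArg (fun z : EuclideanSpace ℝ (Fin n) => z i) h
  simp only [off_apply] at this
  have h2 : (f i : ℝ) = (g i : ℝ) := by linarith
  have h3 : (f i : ℕ) = (g i : ℕ) := by exact_mod_cast h2
  exact Fin.val_injective h3

/-- centers of the shifted balls are 2-separated -/
lemma centers_sep {S : Finset (EuclideanSpace ℝ (Fin n))} (hS : good S)
    {s t : EuclideanSpace ℝ (Fin n)} (hs : s ∈ S) (ht : t ∈ S) {f g : Fin n → Fin 3}
    (hne : (s, f) ≠ (t, g)) : 2 ≤ dist (s - off f) (t - off g) := by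
  have key : dist (s - off f) (t - off g) = dist s (t + (off f - off g)) := by
    rw [dist_eq_norm, dist_eq_norm]
    congr 1
    abel
  rw [key]
  have h1 : s ∈ mult S := subset_mult hs
  have h2 : t + (off f - off g) ∈ mult S :=
    mult_add_lat (subset_mult ht) (lat_sub (off_mem_lat f) (off_mem_lat g))
  refine hS.2 h1 h2 ?_
  intro he
  have hst : s - t ∈ lat n := by
    have : s - t = off f - off g := by rw [he]; abel
    rw [this]
    exact lat_sub (off_mem_lat f) (off_mem_lat g)
  have hstt : s = t := cube_sub_lat (hS.1 hs) (hS.1 ht) hst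
  subst hstt
  apply hne
  have h0 : off f - off g = 0 := by
    have := he.symm
    apply add_left_cancel (a := s)
    rw [add_zero, ← he]
  have : off f = off g := sub_eq_zero.mp h0
  rw [off_eq_off this]

/-- the translated cube as a preimage -/
def tcube (f : Fin n → Fin 3) : Set (EuclideanSpace ℝ (Fin n)) :=
  (fun z => z - off f) ⁻¹' cube n

lemma mem_tcube {y : EuclideanSpace ℝ (Fin n)} {f : Fin n → Fin 3} :
    y ∈ tcube f ↔ ∀ i, y i - off f i ∈ Set.Ico (0:ℝ) 2 := by
  have h1 : y ∈ tcube f ↔ (y - off f) ∈ cube n := Iff.rfl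
  rw [h1]
  constructor
  · intro h i
    have := h i
    rwa [PiLp.sub_apply] at this
  · intro h i
    rw [PiLp.sub_apply]
    exact h i

lemma tcube_disjoint {f g : Fin n → Fin 3} (h : f ≠ g) : Disjoint (tcube f) (tcube g) := by
  rw [Set.disjoint_left]
  intro y hyf hyg
  apply h
  funext i
  have h1 := mem_tcube.mp hyf i
  have h2 := mem_tcube.mp hyg i
  rw [off_apply] at h1 h2
  simp only [Set.mem_Ico] at h1 h2
  have : (f i : ℝ) = (g i : ℝ) := by
    have hf3 := (f i).2
    have hg3 := (g i).2
    interval_cases h : (f i : ℕ) <;> interval_cases h' : (g i : ℕ) <;>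
      simp_all <;> linarith
  have h3 : (f i).val = (g i).val := by exact_mod_cast this
  exact Fin.val_injective h3

lemma ball_subset_tcubes {s : EuclideanSpace ℝ (Fin n)} (hs : s ∈ cube n) :
    Metric.ball s 1 ⊆ ⋃ f : Fin n → Fin 3, tcube f := by
  intro y hy
  have hco : ∀ i, -1 < y i ∧ y i < 3 := by
    intro i
    have h1 : |y i - s i| ≤ dist y s := by
      rw [dist_eq_norm]
      have := abs_coord_le (y - s) i
      rwa [PiLp.sub_apply] at this
    have h2 : dist y s < 1 := Metric.mem_ball.mp hy
    have h3 := hs i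
    simp only [Set.mem_Ico] at h3
    obtain ⟨hl, hr⟩ := abs_le.mp h1
    constructor <;> nlinarith
  classical
  refine Set.mem_iUnion.mpr ⟨fun i => if y i < 0 then 0 else if y i < 2 then 1 else 2, ?_⟩
  rw [mem_tcube]
  intro i
  rw [off_apply]
  obtain ⟨hl, hr⟩ := hco i
  by_cases h0 : y i < 0
  · simp only [h0, if_true]
    norm_num
    constructor <;> linarith
  · by_cases h2 : y i < 2
    · simp only [h0, if_false, h2, if_true]
      norm_num
      constructor <;> linarith
    · simp only [h0, if_false, h2, if_false]
      norm_num
      constructor <;> linarith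

lemma card_mul_le {S : Finset (EuclideanSpace ℝ (Fin n))} (hS : good S) :
    (S.card : ℝ≥0∞) * volume (Metric.ball (0 : EuclideanSpace ℝ (Fin n)) 1) ≤ 2 ^ n := by
  classical
  set A : EuclideanSpace ℝ (Fin n) × (Fin n → Fin 3) → Set (EuclideanSpace ℝ (Fin n)) :=
    fun sf => Metric.ball (sf.1 - off sf.2) 1 ∩ cube n with hA
  have hmA : ∀ sf, MeasurableSet (A sf) := fun sf =>
    measurableSet_ball.inter measurableSet_cube
  have hdisj : (↑(S ×ˢ (Finset.univ : Finset (Fin n → Fin 3))) :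
      Set (EuclideanSpace ℝ (Fin n) × (Fin n → Fin 3))).PairwiseDisjoint A := by
    rintro ⟨s, f⟩ hsf ⟨t, g⟩ htf hne
    simp only [Finset.coe_product, Set.mem_prod, Finset.mem_coe] at hsf htf
    have hsep := centers_sep hS hsf.1 htf.1 (f := f) (g := g) hne
    have hdb : Disjoint (ball (s - off f) 1) (ball (t - off g) 1) :=
      Metric.ball_disjoint_ball (by linarith : (1:ℝ) + 1 ≤ dist (s - off f) (t - off g))
    exact (hdb.inter_left _).inter_right _
  have hsum : ∑ sf ∈ S ×ˢ (Finset.univ : Finset (Fin n → Fin 3)), volume (A sf) ≤ 2 ^ n := by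
    rw [← measure_biUnion_finset hdisj fun sf _ => hmA sf]
    calc volume (⋃ sf ∈ S ×ˢ (Finset.univ : Finset (Fin n → Fin 3)), A sf)
        ≤ volume (cube n) := measure_mono (by
          intro y hy
          simp only [Set.mem_iUnion] at hy
          obtain ⟨sf, _, hy⟩ := hy
          exact hy.2)
      _ = 2 ^ n := volume_cube
  have hball : ∀ s ∈ S, ∑ f : Fin n → Fin 3, volume (A (s, f)) =
      volume (Metric.ball (0 : EuclideanSpace ℝ (Fin n)) 1) := by
    intro s hs
    have hAB : ∀ f, volume (A (s, f)) = volume (Metric.ball s 1 ∩ tcube f) := by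
      intro f
      have hpre : A (s, f) = (fun z => z + off f) ⁻¹' (Metric.ball s 1 ∩ tcube f) := by
        ext z
        simp only [hA, Set.mem_inter_iff, Set.mem_preimage, tcube, Metric.mem_ball,
          add_sub_cancel_right]
        constructor
        · rintro ⟨h1, h2⟩
          refine ⟨?_, h2⟩
          calc dist (z + off f) s = dist z (s - off f) := by
                rw [dist_eq_norm, dist_eq_norm]; congr 1; abel
            _ < 1 := h1
        · rintro ⟨h1, h2⟩
          refine ⟨?_, h2⟩
          calc dist z (s - off f) = dist (z + off f) s := by
                rw [dist_eq_norm, dist_eq_norm]; congr 1; abel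
            _ < 1 := h1
      rw [hpre]
      exact measure_preimage_add_right volume (off f) _
    calc ∑ f : Fin n → Fin 3, volume (A (s, f))
        = ∑ f : Fin n → Fin 3, volume (Metric.ball s 1 ∩ tcube f) := by
          exact Finset.sum_congr rfl fun f _ => hAB f
      _ = volume (⋃ f ∈ (Finset.univ : Finset (Fin n → Fin 3)), Metric.ball s 1 ∩ tcube f) := by
          rw [measure_biUnion_finset]
          · intro f _ g _ hfg
            exact ((tcube_disjoint hfg).inter_left' _).inter_right' _
          · intro f _
            exact measurableSet_ball.inter (measurableSet_cube.preimage (by measurability))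
      _ = volume (Metric.ball s 1) := by
          congr 1
          rw [← Set.inter_iUnion₂]
          rw [Set.inter_eq_left]
          intro y hy
          have := ball_subset_tcubes (hS.1 hs) hy
          simpa using this
      _ = volume (Metric.ball (0 : EuclideanSpace ℝ (Fin n)) 1) :=
          Measure.addHaar_ball_center volume s 1
  calc (S.card : ℝ≥0∞) * volume (Metric.ball (0 : EuclideanSpace ℝ (Fin n)) 1)
      = ∑ s ∈ S, volume (Metric.ball (0 : EuclideanSpace ℝ (Fin n)) 1) := by
        rw [Finset.sum_const, nsmul_eq_mul]
    _ = ∑ s ∈ S, ∑ f : Fin n → Fin 3, volume (A (s, f)) :=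
        Finset.sum_congr rfl fun s hs => (hball s hs).symm
    _ = ∑ sf ∈ S ×ˢ (Finset.univ : Finset (Fin n → Fin 3)), volume (A sf) := by
        rw [Finset.sum_product]
    _ ≤ 2 ^ n := hsum


noncomputable def kk (n : ℕ) : ℕ :=
  ⌈(2 ^ n : ℝ) / (volume (Metric.closedBall (0 : EuclideanSpace ℝ (Fin n)) 1)).toReal⌉₊

lemma card_le_kk (hn : 0 < n) {S : Finset (EuclideanSpace ℝ (Fin n))} (hS : good S) :
    S.card ≤ kk n := by
  haveI : Nontrivial (EuclideanSpace ℝ (Fin n)) := by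
    refine ⟨0, EuclideanSpace.single ⟨0, hn⟩ 1, fun h => ?_⟩
    have := congrArg (fun z : EuclideanSpace ℝ (Fin n) => z ⟨0, hn⟩) h
    simp [EuclideanSpace.single_apply] at this
  have hvol : volume (Metric.closedBall (0 : EuclideanSpace ℝ (Fin n)) 1) =
      volume (Metric.ball (0 : EuclideanSpace ℝ (Fin n)) 1) :=
    Measure.addHaar_closedBall_eq_addHaar_ball _ _ _
  have h1 := card_mul_le hS
  rw [← hvol] at h1
  set V := volume (Metric.closedBall (0 : EuclideanSpace ℝ (Fin n)) 1) with hV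
  have hV0 : V ≠ 0 := by
    have hp := Metric.measure_ball_pos (volume) (0 : EuclideanSpace ℝ (Fin n)) one_pos
    exact (lt_of_lt_of_le hp (measure_mono Metric.ball_subset_closedBall)).ne'
  have hVt : V ≠ ⊤ := (isCompact_closedBall _ _).measure_lt_top.ne
  have h2 : (S.card : ℝ) * V.toReal ≤ 2 ^ n := by
    have h2t : ((2 : ℝ≥0∞) ^ n) ≠ ⊤ := by simp
    have := ENNReal.toReal_mono h2t h1
    rw [ENNReal.toReal_mul] at this
    simpa using this
  have hVpos : 0 < V.toReal := ENNReal.toReal_pos hV0 hVt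
  have h3 : (S.card : ℝ) ≤ 2 ^ n / V.toReal := (le_div_iff₀ hVpos).mpr h2
  calc S.card = ⌈(S.card : ℝ)⌉₊ := (Nat.ceil_natCast _).symm
    _ ≤ ⌈(2 ^ n : ℝ) / V.toReal⌉₊ := Nat.ceil_mono h3
    _ = kk n := rfl

lemma good_singleton : good ({0} : Finset (EuclideanSpace ℝ (Fin n))) := by
  constructor
  · intro s hs
    rw [Finset.coe_singleton, Set.mem_singleton_iff] at hs
    subst hs
    intro i
    rw [PiLp.zero_apply]
    exact ⟨le_refl _, by norm_num⟩
  · rintro p ⟨s, hs, l, hl, rfl⟩ q ⟨t, ht, m, hm, rfl⟩ hpq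
    rw [Finset.mem_singleton] at hs ht
    subst hs; subst ht
    rw [dist_eq_norm, show (0:EuclideanSpace ℝ (Fin n)) + l - (0 + m) = l - m by abel]
    refine lat_norm (lat_sub hl hm) (sub_ne_zero.mpr fun h => hpq ?_)
    rw [h]

lemma exists_good_sat (hn : 0 < n) :
    ∃ S : Finset (EuclideanSpace ℝ (Fin n)), good S ∧ S.Nonempty ∧ S.card ≤ kk n ∧
      ∀ y : EuclideanSpace ℝ (Fin n), ∃ p ∈ mult S, dist y p ≤ 2 := by
  classical
  set P : ℕ → Prop := fun m =>
    ∃ S : Finset (EuclideanSpace ℝ (Fin n)), good S ∧ S.card = m with hP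
  have h1k : 1 ≤ kk n := by
    have := card_le_kk hn (good_singleton (n := n))
    simpa using this
  have hP1 : P 1 := ⟨{0}, good_singleton, by simp⟩
  have hPspec : P (Nat.findGreatest P (kk n)) := Nat.findGreatest_spec h1k hP1
  have hge1 : 1 ≤ Nat.findGreatest P (kk n) := Nat.le_findGreatest h1k hP1
  obtain ⟨S, hgood, hcard⟩ := hPspec
  have hmax : ∀ T : Finset (EuclideanSpace ℝ (Fin n)), good T → T.card ≤ S.card := by
    intro T hT
    rw [hcard]
    by_contra hlt
    push_neg at hlt
    exact Nat.findGreatest_is_greatest hlt (card_le_kk hn hT) ⟨T, hT, rfl⟩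
  refine ⟨S, hgood, Finset.card_pos.mp (by omega), ?_, ?_⟩
  · rw [hcard]; exact Nat.findGreatest_le _
  intro y
  by_contra hcon
  push_neg at hcon
  set w : Fin n → ℤ := fun i => ⌊y i / 2⌋ with hw
  set ly : EuclideanSpace ℝ (Fin n) :=
    (WithLp.equiv 2 (Fin n → ℝ)).symm (fun i => (2 * w i : ℝ)) with hly
  have hlylat : ly ∈ lat n := ⟨w, rfl⟩
  set y' : EuclideanSpace ℝ (Fin n) := y - ly with hy'
  have hyy' : y = y' + ly := by rw [hy']; abel
  have hy'cube : y' ∈ cube n := by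
    intro i
    have hco : y' i = y i - 2 * (⌊y i / 2⌋ : ℝ) := by
      rw [hy', PiLp.sub_apply]
      rfl
    rw [hco]
    have h1 : (⌊y i / 2⌋ : ℝ) ≤ y i / 2 := Int.floor_le _
    have h2 : y i / 2 < ⌊y i / 2⌋ + 1 := Int.lt_floor_add_one _
    exact ⟨by linarith, by linarith⟩
  have hy'S : y' ∉ S := by
    intro hmem
    have hym : y ∈ mult S := by
      rw [hyy']
      exact mult_add_lat (subset_mult hmem) hlylat
    have h0 := hcon y hym
    simp only [dist_self] at h0
    linarith
  have hins : good (insert y' S) := by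
    constructor
    · intro s hs
      rcases Finset.mem_insert.mp (Finset.mem_coe.mp hs) with rfl | hsS
      · exact hy'cube
      · exact hgood.1 (Finset.mem_coe.mpr hsS)
    · rintro p ⟨s, hsmem, l, hl, rfl⟩ q ⟨t, htmem, m, hm, rfl⟩ hpq
      rcases Finset.mem_insert.mp hsmem with rfl | hsS <;>
        rcases Finset.mem_insert.mp htmem with rfl | htS
      · rw [dist_eq_norm, show y' + l - (y' + m) = l - m by abel]
        refine lat_norm (lat_sub hl hm) (sub_ne_zero.mpr fun h => hpq ?_)
        rw [h]
      · have hq : t + m + (ly - l) ∈ mult S :=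
          mult_add_lat (mult_add_lat (subset_mult htS) hm) (lat_sub hlylat hl)
        have h2 := hcon _ hq
        have hdist : dist (y' + l) (t + m) = dist y (t + m + (ly - l)) := by
          rw [dist_eq_norm, dist_eq_norm]
          congr 1
          rw [hyy']
          abel
        rw [hdist]
        exact h2.le
      · have hq : s + l + (ly - m) ∈ mult S :=
          mult_add_lat (mult_add_lat (subset_mult hsS) hl) (lat_sub hlylat hm)
        have h2 := hcon _ hq
        have hdist : dist (s + l) (y' + m) = dist y (s + l + (ly - m)) := by
          rw [dist_comm, dist_eq_norm, dist_eq_norm]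
          congr 1
          rw [hyy']
          abel
        rw [hdist]
        exact h2.le
      · exact hgood.2 ⟨s, hsS, l, hl, rfl⟩ ⟨t, htS, m, hm, rfl⟩ hpq
  have hc := hmax _ hins
  rw [Finset.card_insert_of_notMem hy'S] at hc
  omega

lemma isClosed_mult {S : Finset (EuclideanSpace ℝ (Fin n))} (hS : good S) :
    IsClosed (mult S) := by
  rw [← isOpen_compl_iff, Metric.isOpen_iff]
  intro y hy
  by_cases h : ∃ p ∈ mult S, dist y p ≤ 1
  · obtain ⟨p, hp, hp1⟩ := h
    have hyp : 0 < dist y p := dist_pos.mpr fun e => hy (e ▸ hp)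
    refine ⟨min (dist y p) (1/2), lt_min hyp (by norm_num), ?_⟩
    intro z hz
    rw [Metric.mem_ball] at hz
    intro hzY
    by_cases hzp : z = p
    · subst hzp
      have h1 : dist y z < dist y z := lt_of_lt_of_le (by rw [dist_comm] at hz; exact hz)
        (min_le_left _ _)
      exact absurd h1 (lt_irrefl _)
    · have h2 := hS.2 hzY hp hzp
      have h3 : dist z p ≤ dist z y + dist y p := dist_triangle z y p
      have h4 : dist z y < 1/2 := lt_of_lt_of_le hz (min_le_right _ _)
      linarith
  · push_neg at h
    refine ⟨1, one_pos, ?_⟩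
    intro z hz hzY
    rw [Metric.mem_ball] at hz
    have := h z hzY
    rw [dist_comm] at hz
    linarith

end Stmt16

open Stmt16 in
/-- γ(Bⁿ, k) ≤ 2 for k = ⌈2ⁿ/vol(Bⁿ)⌉: there is a multilattice
Y = ⋃_{i=1}^k ((2ℤ)ⁿ + x i) with an associated tiling by convex cells ψ p
satisfying Bⁿ + p ⊆ ψ p ⊆ 2Bⁿ + p for every p ∈ Y. -/
theorem stmt_16 (n : ℕ) (hn : 0 < n) :
    ∃ (Y : Set (EuclideanSpace ℝ (Fin n)))
      (x : Fin (⌈(2 ^ n : ℝ) /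
        (volume (Metric.closedBall (0 : EuclideanSpace ℝ (Fin n)) 1)).toReal⌉₊)
        → EuclideanSpace ℝ (Fin n))
      (ψ : EuclideanSpace ℝ (Fin n) → Set (EuclideanSpace ℝ (Fin n))),
      Y = {p | ∃ i, ∃ v : Fin n → ℤ,
        p = x i + (WithLp.equiv 2 (Fin n → ℝ)).symm (fun m => (2 * v m : ℝ))} ∧
      (⋃ p ∈ Y, ψ p) = Set.univ ∧
      (Y.Pairwise fun p q => Disjoint (interior (ψ p)) (interior (ψ q))) ∧
      (∀ p ∈ Y, Convex ℝ (ψ p)) ∧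
      (∀ p ∈ Y, p ∈ interior (ψ p)) ∧
      (∀ p ∈ Y, Metric.closedBall p 1 ⊆ ψ p ∧ ψ p ⊆ Metric.closedBall p 2) := by
  classical
  obtain ⟨S, hgood, hne, hcard, hsat⟩ := exists_good_sat hn
  have h0 : 0 < S.card := Finset.card_pos.mpr hne
  set Y : Set (EuclideanSpace ℝ (Fin n)) := mult S with hYdef
  have hkk : kk n = ⌈(2 ^ n : ℝ) /
      (volume (Metric.closedBall (0 : EuclideanSpace ℝ (Fin n)) 1)).toReal⌉₊ := rfl
  set e := S.equivFin with he
  refine ⟨Y, fun i => if h : (i : ℕ) < S.card then (e.symm ⟨i, h⟩ : EuclideanSpace ℝ (Fin n))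
    else (e.symm ⟨0, h0⟩ : EuclideanSpace ℝ (Fin n)), cell Y, ?_, ?_, ?_, ?_, ?_, ?_⟩
  -- pairwise 2-separation facts reused below
  all_goals (
    have hsep := hgood.2)
  · -- Y equals the multilattice description
    ext p
    constructor
    · rintro ⟨s, hs, l, ⟨v, rfl⟩, rfl⟩
      have hi : ∃ i : Fin (kk n), (if h : (i : ℕ) < S.card then
          (e.symm ⟨i, h⟩ : EuclideanSpace ℝ (Fin n)) else (e.symm ⟨0, h0⟩ :
          EuclideanSpace ℝ (Fin n))) = s := by
        refine ⟨⟨(e ⟨s, hs⟩ : ℕ), lt_of_lt_of_le (e ⟨s, hs⟩).2 hcard⟩, ?_⟩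
        have hlt : ((⟨(e ⟨s, hs⟩ : ℕ), lt_of_lt_of_le (e ⟨s, hs⟩).2 hcard⟩ :
            Fin (kk n)) : ℕ) < S.card := (e ⟨s, hs⟩).2
        rw [dif_pos hlt]
        have : (⟨(e ⟨s, hs⟩ : ℕ), hlt⟩ : Fin S.card) = e ⟨s, hs⟩ := by
          apply Fin.ext
          rfl
        rw [this, Equiv.symm_apply_apply]
      obtain ⟨i, hi⟩ := hi
      exact ⟨i, v, by beta_reduce; rw [hi]⟩
    · rintro ⟨i, v, rfl⟩
      beta_reduce
      by_cases h : (i : ℕ) < S.card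
      · rw [dif_pos h]
        exact ⟨e.symm ⟨i, h⟩, (e.symm ⟨i, h⟩).2, _, ⟨v, rfl⟩, rfl⟩
      · rw [dif_neg h]
        exact ⟨e.symm ⟨0, h0⟩, (e.symm ⟨0, h0⟩).2, _, ⟨v, rfl⟩, rfl⟩
  · -- covering
    rw [Set.eq_univ_iff_forall]
    intro y
    have hYne : Y.Nonempty := ⟨hne.choose, subset_mult hne.choose_spec⟩
    obtain ⟨p, hp, hd⟩ := (isClosed_mult hgood).exists_infDist_eq_dist hYne y
    refine Set.mem_biUnion hp ?_
    intro q hq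
    calc dist y p = Metric.infDist y (mult S) := hd.symm
      _ ≤ dist y q := Metric.infDist_le_dist_of_mem hq
  · -- disjoint interiors
    intro p hp q hq hpq
    rw [Set.disjoint_left]
    intro y hy1 hy2
    exact hpq (cell_interior_unique hp hq hy1 (interior_subset hy2))
  · -- convexity
    intro p _
    exact convex_cell Y p
  · -- center in interior
    intro p hp
    rw [mem_interior]
    refine ⟨Metric.ball p 1, ?_, Metric.isOpen_ball, Metric.mem_ball_self one_pos⟩
    intro y hy
    rw [Metric.mem_ball] at hy
    intro q hq
    by_cases hqp : q = p
    · rw [hqp]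
    · have h2 := hsep hq hp hqp
      have h3 := dist_triangle q y p
      have h4 : dist y q = dist q y := dist_comm y q
      linarith
  · -- sandwich
    intro p hp
    constructor
    · intro y hy
      rw [Metric.mem_closedBall] at hy
      intro q hq
      by_cases hqp : q = p
      · rw [hqp]
      · have h2 := hsep hq hp hqp
        have h3 := dist_triangle q y p
        have h4 : dist y q = dist q y := dist_comm y q
        linarith
    · intro y hy
      obtain ⟨q, hq, hq2⟩ := hsat y
      rw [Metric.mem_closedBall]
      exact le_trans (hy q hq) hq2
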